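/- arXiv:2108.04382 — 9 statements merged into one kernel-verified Lean document; each statement's English description precedes it below -/
import Mathlib

section
/- If X is an infinite-dimensional real Hilbert space, then the weak sequential closure of the cross C equals X × X; that is, for every (x,y) ∈ X × X there exists a sequence (xₙ,yₙ) in C converging weakly to (x,y). In particular, C is not weakly sequentially closed. -/
open RealInnerProductSpace Filter

theorem cross_weak_sequential_closure_eq_univ
    {X : Type*} [NormedAddCommGroup X] [InnerProductSpace ℝ X] [CompleteSpace X]
    (hX : ¬ FiniteDimensional ℝ X) (x y : X) :
    ∃ f g : ℕ → X, (∀ n : ℕ, ⟪f n, g n⟫ = 0) ∧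
      ∀ u v : X,
        Tendsto (fun n : ℕ => ⟪f n, u⟫ + ⟪g n, v⟫) atTop (nhds (⟪x, u⟫ + ⟪y, v⟫)) := by
  classical
  set K : Submodule ℝ X := Submodule.span ℝ ({x, y} : Set X) with hK
  haveI : FiniteDimensional ℝ K :=
    FiniteDimensional.span_of_finite ℝ ((Set.finite_singleton y).insert x)
  -- Kᗮ is infinite dimensional
  have hV : ¬ FiniteDimensional ℝ Kᗮ := by
    intro h
    apply hX
    have htop : K ⊔ Kᗮ = ⊤ := Submodule.sup_orthogonal_of_hasOrthogonalProjection
    haveI : FiniteDimensional ℝ (K ⊔ Kᗮ : Submodule ℝ X) := inferInstance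
    rw [htop] at this
    exact (Submodule.topEquiv : (⊤ : Submodule ℝ X) ≃ₗ[ℝ] X).finiteDimensional
  -- get a linearly independent sequence in Kᗮ
  obtain ⟨s, b⟩ : ∃ s : Set Kᗮ, Nonempty (Module.Basis s ℝ Kᗮ) :=
    ⟨_, ⟨Module.Basis.ofVectorSpace ℝ Kᗮ⟩⟩
  obtain ⟨b⟩ := b
  haveI : Infinite s := by
    rw [Set.infinite_coe_iff]
    intro hfin
    haveI := hfin.fintype
    exact hV (Module.Finite.of_basis b)
  let φ : ℕ ↪ s := Infinite.natEmbedding s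
  have hli : LinearIndependent ℝ (fun n : ℕ => b (φ n)) :=
    b.linearIndependent.comp φ φ.injective
  -- orthonormalize
  let e : ℕ → Kᗮ := InnerProductSpace.gramSchmidtNormed ℝ (fun n : ℕ => b (φ n))
  have hON : Orthonormal ℝ e := InnerProductSpace.gramSchmidtNormed_orthonormal hli
  -- push to X via the isometric inclusion
  let e' : ℕ → X := fun n => (e n : X)
  have hON' : Orthonormal ℝ e' := hON.comp_linearIsometry Kᗮ.subtypeₗᵢ
  have hxK : x ∈ K := Submodule.subset_span (Set.mem_insert _ _)
  have hyK : y ∈ K := Submodule.subset_span (Set.mem_insert_of_mem _ rfl)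
  have hxe : ∀ n, ⟪x, e' n⟫ = 0 := fun n =>
    (Submodule.mem_orthogonal K (e' n)).1 (e n).2 x hxK
  have hye : ∀ n, ⟪y, e' n⟫ = 0 := fun n =>
    (Submodule.mem_orthogonal K (e' n)).1 (e n).2 y hyK
  have hee : ∀ n, ⟪e' n, e' n⟫ = 1 := fun n => by
    have h := hON'.1 n
    rw [real_inner_self_eq_norm_sq, h]; norm_num
  set c : ℝ := ⟪x, y⟫ with hc
  refine ⟨fun n => x + c • e' n, fun n => y - e' n, ?_, ?_⟩
  · intro n
    have h1 : ⟪e' n, y⟫ = 0 := by rw [real_inner_comm]; exact hye n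
    simp only [inner_add_left, inner_sub_right, real_inner_smul_left, hxe n, hye n, h1, hee n]
    ring
  · intro u v
    -- the inner products with e' n tend to zero
    have key : ∀ w : X, Tendsto (fun n => ⟪e' n, w⟫) atTop (nhds 0) := by
      intro w
      have hsum := hON'.inner_products_summable w
      have h2 : Tendsto (fun n => ‖⟪e' n, w⟫‖ ^ 2) atTop (nhds 0) := hsum.tendsto_atTop_zero
      have h3 : Tendsto (fun n => ‖⟪e' n, w⟫‖) atTop (nhds 0) := by
        have := h2.sqrt
        simpa [Real.sqrt_sq_eq_abs, Real.norm_eq_abs] using this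
      exact tendsto_zero_iff_norm_tendsto_zero.2 h3
    have heq : (fun n : ℕ => ⟪x + c • e' n, u⟫ + ⟪y - e' n, v⟫) =
        fun n : ℕ => (⟪x, u⟫ + ⟪y, v⟫) + (c * ⟪e' n, u⟫ - ⟪e' n, v⟫) := by
      funext n
      simp only [inner_add_left, inner_sub_left, real_inner_smul_left]
      ring
    rw [heq]
    have : Tendsto (fun n : ℕ => c * ⟪e' n, u⟫ - ⟪e' n, v⟫) atTop (nhds 0) := by
      have := ((key u).const_mul c).sub (key v)
      simpa using this
    have := this.const_add (⟪x, u⟫ + ⟪y, v⟫)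
    simpa using this
end

section
/- Let (x₀,y₀) ∈ X × X and suppose (x,y) is a nearest point to (x₀,y₀) in the cross C, i.e. (x,y) ∈ C and ‖x−x₀‖² + ‖y−y₀‖² ≤ ‖u−x₀‖² + ‖v−y₀‖² for all (u,v) ∈ C. Then there exists a closed linear subspace U of X such that x = P_U x₀ and y = P_{U^⊥} y₀, where P_U and P_{U^⊥} denote the orthogonal projections onto U and its orthogonal complement. -/
open RealInnerProductSpace

private lemma quad_aux (a b : ℝ) (hb : 0 ≤ b)
    (h : ∀ t : ℝ, 0 ≤ 2 * t * a + t ^ 2 * b) : a = 0 := by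
  have ht := h (-a / (b + 1))
  have hb1 : (0:ℝ) < b + 1 := by linarith
  have h2 : 0 ≤ (2 * (-a / (b + 1)) * a + (-a / (b + 1)) ^ 2 * b) * (b + 1) ^ 2 := by
    positivity
  have h3 : (2 * (-a / (b + 1)) * a + (-a / (b + 1)) ^ 2 * b) * (b + 1) ^ 2
      = -a ^ 2 * (b + 2) := by
    field_simp
    ring
  nlinarith [sq_nonneg a]

theorem cross_nearest_point_is_projection_pair
    {X : Type*} [NormedAddCommGroup X] [InnerProductSpace ℝ X] [CompleteSpace X]
    (x₀ y₀ x y : X) (hxy : ⟪x, y⟫ = 0)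
    (hmin : ∀ u v : X, ⟪u, v⟫ = 0 →
      ‖x - x₀‖ ^ 2 + ‖y - y₀‖ ^ 2 ≤ ‖u - x₀‖ ^ 2 + ‖v - y₀‖ ^ 2) :
    ∃ (U : Submodule ℝ X) (_ : IsClosed (U : Set X)) (_ : CompleteSpace U),
      x = (Submodule.orthogonalProjectionOnto U x₀ : X) ∧
      y = (Submodule.orthogonalProjectionOnto Uᗮ y₀ : X) := by
  set U : Submodule ℝ X := (ℝ ∙ y)ᗮ with hUdef
  have hclosed : IsClosed (U : Set X) := Submodule.isClosed_orthogonal _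
  have hcomplete : CompleteSpace U := hclosed.completeSpace_coe
  have hUorth : Uᗮ = ℝ ∙ y := Submodule.orthogonal_orthogonal (ℝ ∙ y)
  have hxU : x ∈ U := by
    rw [hUdef, Submodule.mem_orthogonal]
    intro u hu
    obtain ⟨c, rfl⟩ := Submodule.mem_span_singleton.mp hu
    rw [real_inner_smul_left, real_inner_comm, hxy, mul_zero]
  refine ⟨U, hclosed, hcomplete, ?_, ?_⟩
  · symm
    apply Submodule.eq_starProjection_of_mem_of_inner_eq_zero hxU
    intro w hw
    have hwy : ⟪w, y⟫ = 0 := by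
      rw [real_inner_comm]
      exact (Submodule.mem_orthogonal _ _).mp hw y (Submodule.mem_span_singleton_self y)
    have key : ∀ t : ℝ, 0 ≤ 2 * t * ⟪x - x₀, w⟫ + t ^ 2 * ‖w‖ ^ 2 := by
      intro t
      have hc : ⟪x + t • w, y⟫ = 0 := by
        rw [inner_add_left, real_inner_smul_left, hxy, hwy]; ring
      have hm := hmin (x + t • w) y hc
      have heq : x + t • w - x₀ = (x - x₀) + t • w := by abel
      have expand : ‖x + t • w - x₀‖ ^ 2
          = ‖x - x₀‖ ^ 2 + 2 * t * ⟪x - x₀, w⟫ + t ^ 2 * ‖w‖ ^ 2 := by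
        rw [heq, @norm_add_sq_real, real_inner_smul_right, norm_smul]
        simp [mul_pow, sq_abs]
        ring
      rw [expand] at hm
      linarith
    have h0 : ⟪x - x₀, w⟫ = 0 := quad_aux _ _ (by positivity) key
    have : ⟪x₀ - x, w⟫ = -⟪x - x₀, w⟫ := by
      rw [← inner_neg_left]; congr 1; abel
    rw [this, h0, neg_zero]
  · symm
    have hyU : y ∈ Uᗮ := by
      rw [hUorth]; exact Submodule.mem_span_singleton_self y
    apply Submodule.eq_starProjection_of_mem_of_inner_eq_zero hyU
    intro w hw
    rw [hUorth] at hw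
    obtain ⟨c, rfl⟩ := Submodule.mem_span_singleton.mp hw
    rw [real_inner_smul_right]
    have key : ∀ t : ℝ, 0 ≤ 2 * t * ⟪y - y₀, y⟫ + t ^ 2 * ‖y‖ ^ 2 := by
      intro t
      have hc : ⟪x, y + t • y⟫ = 0 := by
        rw [inner_add_right, real_inner_smul_right, hxy]; ring
      have hm := hmin x (y + t • y) hc
      have heq : y + t • y - y₀ = (y - y₀) + t • y := by abel
      have expand : ‖y + t • y - y₀‖ ^ 2
          = ‖y - y₀‖ ^ 2 + 2 * t * ⟪y - y₀, y⟫ + t ^ 2 * ‖y‖ ^ 2 := by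
        rw [heq, @norm_add_sq_real, real_inner_smul_right, norm_smul]
        simp [mul_pow, sq_abs]
        ring
      rw [expand] at hm
      linarith
    have h0 : ⟪y - y₀, y⟫ = 0 := quad_aux _ _ (by positivity) key
    have : ⟪y₀ - y, y⟫ = -⟪y - y₀, y⟫ := by
      rw [← inner_neg_left]; congr 1; abel
    rw [this, h0, neg_zero, mul_zero]
end

section
/- Let (x₀,y₀) ∈ X × X with ⟨x₀,y₀⟩ ≠ 0. Then (0,0) is not a nearest point to (x₀,y₀) in the cross C; that is, there exists (u,v) ∈ C with ‖u−x₀‖² + ‖v−y₀‖² < ‖x₀‖² + ‖y₀‖². -/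
open RealInnerProductSpace

theorem cross_zero_not_nearest
    {X : Type*} [NormedAddCommGroup X] [InnerProductSpace ℝ X] [CompleteSpace X]
    (x₀ y₀ : X) (h : ⟪x₀, y₀⟫ ≠ 0) :
    ∃ u v : X, ⟪u, v⟫ = 0 ∧
      ‖u - x₀‖ ^ 2 + ‖v - y₀‖ ^ 2 < ‖x₀‖ ^ 2 + ‖y₀‖ ^ 2 := by
  have hx : x₀ ≠ 0 := by
    rintro rfl
    simp at h
  have hxn : (0:ℝ) < ‖x₀‖ := norm_pos_iff.mpr hx
  have hxn2 : (0:ℝ) < ‖x₀‖ ^ 2 := by positivity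
  set c : ℝ := ⟪x₀, y₀⟫ / ‖x₀‖ ^ 2 with hc
  refine ⟨x₀, y₀ - c • x₀, ?_, ?_⟩
  · rw [inner_sub_right, inner_smul_right, real_inner_self_eq_norm_sq]
    rw [hc, div_mul_cancel₀ _ hxn2.ne', sub_self]
  · have h1 : ‖x₀ - x₀‖ ^ 2 = 0 := by simp
    have h2 : ‖y₀ - c • x₀ - y₀‖ ^ 2 = c ^ 2 * ‖x₀‖ ^ 2 := by
      have : y₀ - c • x₀ - y₀ = -(c • x₀) := by abel
      rw [this, norm_neg, norm_smul]
      simp [mul_pow, sq_abs]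
    rw [h1, h2, hc]
    have hcs : ⟪x₀, y₀⟫ ^ 2 ≤ ‖x₀‖ ^ 2 * ‖y₀‖ ^ 2 := by
      have := abs_real_inner_le_norm x₀ y₀
      calc ⟪x₀, y₀⟫ ^ 2 = |⟪x₀, y₀⟫| ^ 2 := (sq_abs _).symm
        _ ≤ (‖x₀‖ * ‖y₀‖) ^ 2 := by
            apply pow_le_pow_left₀ (abs_nonneg _) this
        _ = ‖x₀‖ ^ 2 * ‖y₀‖ ^ 2 := by ring
    rw [zero_add, div_pow, div_mul_eq_mul_div, div_lt_iff₀ (by positivity)]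
    calc ⟪x₀, y₀⟫ ^ 2 * ‖x₀‖ ^ 2 ≤ ‖x₀‖ ^ 2 * ‖y₀‖ ^ 2 * ‖x₀‖ ^ 2 := by
          apply mul_le_mul_of_nonneg_right hcs (by positivity)
      _ < (‖x₀‖ ^ 2 + ‖y₀‖ ^ 2) * (‖x₀‖ ^ 2) ^ 2 := by nlinarith [mul_pos hxn2 (mul_pos hxn2 hxn2)]
end

section
/- Let (x₀,y₀) ∈ X × X with ⟨x₀,y₀⟩ ≠ 0, and suppose (x,y) is a nearest point to (x₀,y₀) in the cross C, i.e. (x,y) ∈ C and ‖x−x₀‖² + ‖y−y₀‖² ≤ ‖u−x₀‖² + ‖v−y₀‖² for all (u,v) ∈ C. Then (x,y) ≠ (0,0). -/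
open RealInnerProductSpace

theorem cross_nearest_point_ne_zero
    {X : Type*} [NormedAddCommGroup X] [InnerProductSpace ℝ X] [CompleteSpace X]
    (x₀ y₀ x y : X) (h : ⟪x₀, y₀⟫ ≠ 0) (hxy : ⟪x, y⟫ = 0)
    (hmin : ∀ u v : X, ⟪u, v⟫ = 0 →
      ‖x - x₀‖ ^ 2 + ‖y - y₀‖ ^ 2 ≤ ‖u - x₀‖ ^ 2 + ‖v - y₀‖ ^ 2) :
    (x, y) ≠ ((0 : X), (0 : X)) := by
  intro hzero
  obtain ⟨hx0, hy0⟩ := Prod.mk.injEq .. ▸ hzero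
  subst hx0; subst hy0
  have hx₀ : x₀ ≠ 0 := fun hx => h (by rw [hx, inner_zero_left])
  set c : ℝ := ⟪x₀, y₀⟫ with hc
  have hnx : ‖x₀‖ > 0 := norm_pos_iff.mpr hx₀
  set v : X := y₀ - (c / ‖x₀‖ ^ 2) • x₀ with hv
  have horth : ⟪x₀, v⟫ = 0 := by
    rw [hv, inner_sub_right, real_inner_smul_right, real_inner_self_eq_norm_sq]
    field_simp
    exact sub_self _
  have key := hmin x₀ v horth
  have h1 : ‖(0 : X) - x₀‖ ^ 2 = ‖x₀‖ ^ 2 := by rw [zero_sub, norm_neg]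
  have h2 : ‖(0 : X) - y₀‖ ^ 2 = ‖y₀‖ ^ 2 := by rw [zero_sub, norm_neg]
  have h3 : ‖x₀ - x₀‖ ^ 2 = 0 := by simp
  have h4 : ‖v - y₀‖ ^ 2 = c ^ 2 / ‖x₀‖ ^ 2 := by
    have : v - y₀ = -((c / ‖x₀‖ ^ 2) • x₀) := by rw [hv]; abel
    rw [this, norm_neg, norm_smul, mul_pow, Real.norm_eq_abs, sq_abs]
    field_simp
  rw [h1, h2, h3, h4] at key
  have hcs : c ≤ ‖x₀‖ * ‖y₀‖ := real_inner_le_norm x₀ y₀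
  have hcs' : -(‖x₀‖ * ‖y₀‖) ≤ c := by
    have := real_inner_le_norm x₀ (-y₀)
    rw [inner_neg_right, norm_neg] at this
    linarith
  have hc2 : c ^ 2 ≤ ‖x₀‖ ^ 2 * ‖y₀‖ ^ 2 := by nlinarith
  have : c ^ 2 / ‖x₀‖ ^ 2 ≤ ‖y₀‖ ^ 2 := by
    rw [div_le_iff₀ (by positivity)]; nlinarith
  nlinarith
end

section
/- Let X be a finite-dimensional real Hilbert space, let (x₀,y₀) ∈ X × X with ⟨x₀,y₀⟩ ≠ 0, x₀ ≠ y₀ and x₀ ≠ −y₀, and suppose (x,y) is a nearest point to (x₀,y₀) in the cross C, i.e. (x,y) ∈ C and ‖x−x₀‖² + ‖y−y₀‖² ≤ ‖u−x₀‖² + ‖v−y₀‖² for all (u,v) ∈ C. Then there exists a unique λ ∈ ℝ with λ ≠ 1 and λ ≠ −1 such that x + λ·y = x₀, y + λ·x = y₀, x = (1/(1−λ²))·(x₀ − λ·y₀), and y = (1/(1−λ²))·(y₀ − λ·x₀). -/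
open RealInnerProductSpace

lemma quadAux (a b : ℝ) (ha : 0 ≤ a) (h : ∀ t : ℝ, 0 ≤ a * t ^ 2 + b * t) : b = 0 := by
  have h1 := h (-b / (a + 1))
  have hpos : (0:ℝ) < a + 1 := by linarith
  have heq : a * (-b / (a + 1)) ^ 2 + b * (-b / (a + 1)) = -b ^ 2 / (a + 1) ^ 2 := by
    field_simp; ring
  rw [heq] at h1
  have hd : ((a:ℝ) + 1) ^ 2 ≠ 0 := by positivity
  have h4 : (0:ℝ) ≤ -b ^ 2 := by
    have := mul_nonneg h1 (sq_nonneg (a + 1))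
    rwa [div_mul_cancel₀ _ hd] at this
  nlinarith [sq_nonneg b]

lemma perpSpan {X : Type*} [NormedAddCommGroup X] [InnerProductSpace ℝ X]
    (y w : X) (hy : y ≠ 0) (h : ∀ z : X, ⟪z, y⟫ = 0 → ⟪w, z⟫ = 0) : ∃ c : ℝ, w = c • y := by
  have hyy : ⟪y, y⟫ ≠ 0 := inner_self_ne_zero.mpr hy
  set c := ⟪y, w⟫ / ⟪y, y⟫ with hc
  refine ⟨c, ?_⟩
  have hz : ⟪w - c • y, y⟫ = 0 := by
    rw [inner_sub_left, real_inner_smul_left, hc]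
    field_simp [real_inner_comm w y]
    rw [real_inner_comm w y, sub_self]
  have h1 := h _ hz
  have h2 : ⟪c • y, w - c • y⟫ = 0 := by
    rw [real_inner_smul_left, real_inner_comm, hz, mul_zero]
  have h3 : ⟪w - c • y, w - c • y⟫ = 0 := by
    rw [show (⟪w - c • y, w - c • y⟫:ℝ) = ⟪w, w - c • y⟫ - ⟪c • y, w - c • y⟫ from by
      rw [inner_sub_left], h1, h2, sub_zero]
  exact sub_eq_zero.mp (inner_self_eq_zero.mp h3)


lemma crossClosing {X : Type*} [NormedAddCommGroup X] [InnerProductSpace ℝ X]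
    (x₀ y₀ x y : X) (hx0 : x₀ ≠ 0) (hne : x₀ ≠ y₀) (hne' : x₀ ≠ -y₀)
    (lam : ℝ) (h1 : x + lam • y = x₀) (h2 : y + lam • x = y₀) :
    ∃! lam : ℝ, lam ≠ 1 ∧ lam ≠ -1 ∧
      x + lam • y = x₀ ∧ y + lam • x = y₀ ∧
      x = (1 / (1 - lam ^ 2)) • (x₀ - lam • y₀) ∧
      y = (1 / (1 - lam ^ 2)) • (y₀ - lam • x₀) := by
  have hl1 : lam ≠ 1 := by
    rintro rfl
    apply hne
    rw [← h1, ← h2, one_smul, one_smul, add_comm]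
  have hl2 : lam ≠ -1 := by
    rintro rfl
    apply hne'
    rw [← h1, ← h2]
    module
  have hden : (1 : ℝ) - lam ^ 2 ≠ 0 := by
    intro hd
    have h' : (lam - 1) * (lam + 1) = 0 := by ring_nf; linarith
    rcases mul_eq_zero.mp h' with h' | h'
    · exact hl1 (by linarith)
    · exact hl2 (by linarith)
  have hx : x = (1 / (1 - lam ^ 2)) • (x₀ - lam • y₀) := by
    have hh : x₀ - lam • y₀ = (1 - lam ^ 2) • x := by rw [← h1, ← h2]; module
    rw [hh, smul_smul, one_div, inv_mul_cancel₀ hden, one_smul]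
  have hy : y = (1 / (1 - lam ^ 2)) • (y₀ - lam • x₀) := by
    have hh : y₀ - lam • x₀ = (1 - lam ^ 2) • y := by rw [← h1, ← h2]; module
    rw [hh, smul_smul, one_div, inv_mul_cancel₀ hden, one_smul]
  refine ⟨lam, ⟨hl1, hl2, h1, h2, hx, hy⟩, ?_⟩
  rintro l ⟨-, -, e1, e2, -, -⟩
  by_contra hll
  have hd : l - lam ≠ 0 := sub_ne_zero.mpr hll
  have hy' : y = 0 := by
    have hs : (l - lam) • y = 0 := by
      have := e1.trans h1.symm
      rw [sub_smul, sub_eq_zero]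
      exact add_left_cancel this
    rcases smul_eq_zero.mp hs with h' | h'
    · exact absurd h' hd
    · exact h'
  have hx' : x = 0 := by
    have hs : (l - lam) • x = 0 := by
      have := e2.trans h2.symm
      rw [sub_smul, sub_eq_zero]
      exact add_left_cancel this
    rcases smul_eq_zero.mp hs with h' | h'
    · exact absurd h' hd
    · exact h'
  apply hx0
  rw [← h1, hx', hy', smul_zero, add_zero]

theorem cross_nearest_point_unique_multiplier
    {X : Type*} [NormedAddCommGroup X] [InnerProductSpace ℝ X] [FiniteDimensional ℝ X]
    (x₀ y₀ x y : X) (h : ⟪x₀, y₀⟫ ≠ 0) (hne : x₀ ≠ y₀) (hne' : x₀ ≠ -y₀)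
    (hxy : ⟪x, y⟫ = 0)
    (hmin : ∀ u v : X, ⟪u, v⟫ = 0 →
      ‖x - x₀‖ ^ 2 + ‖y - y₀‖ ^ 2 ≤ ‖u - x₀‖ ^ 2 + ‖v - y₀‖ ^ 2) :
    ∃! lam : ℝ, lam ≠ 1 ∧ lam ≠ -1 ∧
      x + lam • y = x₀ ∧ y + lam • x = y₀ ∧
      x = (1 / (1 - lam ^ 2)) • (x₀ - lam • y₀) ∧
      y = (1 / (1 - lam ^ 2)) • (y₀ - lam • x₀) := by
  have hx0 : x₀ ≠ 0 := by rintro rfl; exact h (by simp)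
  have hy0 : y₀ ≠ 0 := by rintro rfl; exact h (by simp)
  have hyx : ⟪y, x⟫ = 0 := by rw [real_inner_comm]; exact hxy
  -- first-order conditions
  have key1 : ∀ z : X, ⟪z, y⟫ = 0 → ⟪x - x₀, z⟫ = 0 := by
    intro z hz
    have hq : ∀ t : ℝ, 0 ≤ ‖z‖ ^ 2 * t ^ 2 + (2 * ⟪x - x₀, z⟫) * t := by
      intro t
      have hc : ⟪x + t • z, y⟫ = 0 := by
        rw [inner_add_left, real_inner_smul_left, hxy, hz, mul_zero, add_zero]
      have hm := hmin (x + t • z) y hc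
      have hex : ‖x + t • z - x₀‖ ^ 2
          = ‖x - x₀‖ ^ 2 + 2 * ⟪x - x₀, t • z⟫ + ‖t • z‖ ^ 2 := by
        rw [show x + t • z - x₀ = (x - x₀) + t • z from by abel, norm_add_sq_real]
      rw [hex] at hm
      have hns : ‖t • z‖ ^ 2 = t ^ 2 * ‖z‖ ^ 2 := by
        rw [norm_smul, mul_pow, Real.norm_eq_abs, sq_abs]
      rw [hns, real_inner_smul_right] at hm
      nlinarith [hm]
    have := quadAux _ _ (sq_nonneg ‖z‖) hq
    linarith
  have key2 : ∀ z : X, ⟪z, x⟫ = 0 → ⟪y - y₀, z⟫ = 0 := by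
    intro z hz
    have hq : ∀ t : ℝ, 0 ≤ ‖z‖ ^ 2 * t ^ 2 + (2 * ⟪y - y₀, z⟫) * t := by
      intro t
      have hc : ⟪x, y + t • z⟫ = 0 := by
        rw [inner_add_right, real_inner_smul_right, hxy, real_inner_comm, hz, mul_zero, add_zero]
      have hm := hmin x (y + t • z) hc
      have hex : ‖y + t • z - y₀‖ ^ 2
          = ‖y - y₀‖ ^ 2 + 2 * ⟪y - y₀, t • z⟫ + ‖t • z‖ ^ 2 := by
        rw [show y + t • z - y₀ = (y - y₀) + t • z from by abel, norm_add_sq_real]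
      rw [hex] at hm
      have hns : ‖t • z‖ ^ 2 = t ^ 2 * ‖z‖ ^ 2 := by
        rw [norm_smul, mul_pow, Real.norm_eq_abs, sq_abs]
      rw [hns, real_inner_smul_right] at hm
      nlinarith [hm]
    have := quadAux _ _ (sq_nonneg ‖z‖) hq
    linarith
  by_cases hxz : x = 0
  · -- x = 0 : y = y₀ and x₀ = c • y₀
    have hyy0 : y = y₀ := by
      have := key2 (y - y₀) (by rw [hxz, inner_zero_right])
      exact sub_eq_zero.mp (inner_self_eq_zero.mp this)
    obtain ⟨c, hc⟩ := perpSpan y (x - x₀) (hyy0 ▸ hy0) key1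
    refine crossClosing x₀ y₀ x y hx0 hne hne' (-c) ?_ ?_
    · rw [neg_smul, ← sub_eq_add_neg, ← hc]; abel
    · rw [hxz, smul_zero, add_zero, hyy0]
  · by_cases hyz : y = 0
    · -- y = 0 : x = x₀ and y₀ = c • x₀
      have hxx0 : x = x₀ := by
        have := key1 (x - x₀) (by rw [hyz, inner_zero_right])
        exact sub_eq_zero.mp (inner_self_eq_zero.mp this)
      obtain ⟨c, hc⟩ := perpSpan x (y - y₀) hxz key2
      refine crossClosing x₀ y₀ x y hx0 hne hne' (-c) ?_ ?_
      · rw [hyz, smul_zero, add_zero, hxx0]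
      · rw [neg_smul, ← sub_eq_add_neg, ← hc]; abel
    · -- both nonzero
      obtain ⟨c₁, hc₁⟩ := perpSpan y (x - x₀) hyz key1
      obtain ⟨c₂, hc₂⟩ := perpSpan x (y - y₀) hxz key2
      have hceq : c₁ = c₂ := by
        set α := ‖x‖ ^ 2 with hα
        set β := ‖y‖ ^ 2 with hβ
        have hαpos : 0 < α := pow_pos (norm_pos_iff.mpr hxz) 2
        have hβpos : 0 < β := pow_pos (norm_pos_iff.mpr hyz) 2
        have hq : ∀ t : ℝ, 0 ≤ (α ^ 2 * β + β ^ 2 * α) * t ^ 2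
            + (2 * c₁ * α * β - 2 * c₂ * β * α) * t := by
          intro t
          have hcon : ⟪x + (t * α) • y, y - (t * β) • x⟫ = 0 := by
            rw [inner_sub_right, inner_add_left, inner_add_left, real_inner_smul_left,
              real_inner_smul_left, real_inner_smul_right, real_inner_smul_right,
              hxy, hyx, real_inner_self_eq_norm_sq, real_inner_self_eq_norm_sq, ← hα, ← hβ]
            ring
          have hm := hmin _ _ hcon
          have e1 : x + (t * α) • y - x₀ = (c₁ + t * α) • y := by
            rw [show x + (t * α) • y - x₀ = (x - x₀) + (t * α) • y from by abel, hc₁,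
              add_smul]
          have e2 : y - (t * β) • x - y₀ = (c₂ - t * β) • x := by
            rw [show y - (t * β) • x - y₀ = (y - y₀) - (t * β) • x from by abel, hc₂,
              sub_smul]
          rw [e1, e2, hc₁, hc₂] at hm
          have n1 : ∀ (r : ℝ) (v : X), ‖r • v‖ ^ 2 = r ^ 2 * ‖v‖ ^ 2 := by
            intro r v; rw [norm_smul, mul_pow, Real.norm_eq_abs, sq_abs]
          rw [n1, n1, n1, n1] at hm
          nlinarith [hm]
        have hb := quadAux _ _ (by nlinarith) hq
        have : 2 * α * β * (c₁ - c₂) = 0 := by linarith [hb]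
        have h2 : c₁ - c₂ = 0 := by
          rcases mul_eq_zero.mp this with h' | h'
          · nlinarith
          · exact h'
        linarith
      refine crossClosing x₀ y₀ x y hx0 hne hne' (-c₁) ?_ ?_
      · rw [neg_smul, ← sub_eq_add_neg, ← hc₁]; abel
      · rw [neg_smul, ← sub_eq_add_neg, hceq, ← hc₂]; abel
end

section
/- Let (x₀,y₀) ∈ X × X, let λ ∈ ℝ with λ ≠ 1 and λ ≠ −1, and set x := (1/(1−λ²))·(x₀ − λ·y₀) and y := (1/(1−λ²))·(y₀ − λ·x₀). If ⟨x,y⟩ = 0, then (1/2)‖x−x₀‖² + (1/2)‖y−y₀‖² = (1/2)·λ·⟨x₀,y₀⟩. -/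
open RealInnerProductSpace

theorem cross_objective_value_of_orthogonal
    {X : Type*} [NormedAddCommGroup X] [InnerProductSpace ℝ X]
    (x₀ y₀ : X) (lam : ℝ) (hl1 : lam ≠ 1) (hl2 : lam ≠ -1)
    (x y : X)
    (hx : x = (1 / (1 - lam ^ 2)) • (x₀ - lam • y₀))
    (hy : y = (1 / (1 - lam ^ 2)) • (y₀ - lam • x₀))
    (hxy : ⟪x, y⟫ = 0) :
    (1 / 2) * ‖x - x₀‖ ^ 2 + (1 / 2) * ‖y - y₀‖ ^ 2 = (1 / 2) * lam * ⟪x₀, y₀⟫ := by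
  have hne : (1 : ℝ) - lam ^ 2 ≠ 0 := by
    intro h
    rcases mul_eq_zero.mp (show (lam - 1) * (lam + 1) = 0 by ring_nf; linarith) with h1 | h1
    · exact hl1 (by linarith)
    · exact hl2 (by linarith)
  subst hx hy
  rw [← real_inner_self_eq_norm_sq, ← real_inner_self_eq_norm_sq]
  simp only [inner_sub_left, inner_sub_right, inner_smul_left, inner_smul_right,
    real_inner_comm y₀ x₀, RCLike.ofReal_real_eq_id, id, conj_trivial] at *
  field_simp at *
  linear_combination (-lam*(1+lam^2)) * hxy
end

section
/- Let (x₀,y₀) ∈ X × X and let U be a closed linear subspace of X, with orthogonal projections P_U onto U and P_{U^⊥} onto its orthogonal complement. Then (‖x₀‖² + ‖y₀‖² − ‖x₀+y₀‖·‖x₀−y₀‖)/4 ≤ (1/2)‖P_U x₀ − x₀‖² + (1/2)‖P_{U^⊥} y₀ − y₀‖². -/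
open RealInnerProductSpace

theorem cross_distance_lower_bound_projection
    {X : Type*} [NormedAddCommGroup X] [InnerProductSpace ℝ X] [CompleteSpace X]
    (x₀ y₀ : X) (U : Submodule ℝ X) (hU : IsClosed (U : Set X))
    [CompleteSpace U] :
    (‖x₀‖ ^ 2 + ‖y₀‖ ^ 2 - ‖x₀ + y₀‖ * ‖x₀ - y₀‖) / 4 ≤
      (1 / 2) * ‖(U.orthogonalProjection x₀ : X) - x₀‖ ^ 2 +
      (1 / 2) * ‖(Uᗮ.orthogonalProjection y₀ : X) - y₀‖ ^ 2 := by
  set a : X := (U.orthogonalProjection x₀ : X) with ha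
  set b : X := (Uᗮ.orthogonalProjection x₀ : X) with hb
  set c : X := (U.orthogonalProjection y₀ : X) with hc
  set d : X := (Uᗮ.orthogonalProjection y₀ : X) with hd
  have haU : a ∈ U := (U.orthogonalProjection x₀).2
  have hbU : b ∈ Uᗮ := (Uᗮ.orthogonalProjection x₀).2
  have hcU : c ∈ U := (U.orthogonalProjection y₀).2
  have hdU : d ∈ Uᗮ := (Uᗮ.orthogonalProjection y₀).2
  have hx : x₀ = a + b := (U.starProjection_add_starProjection_orthogonal x₀).symm
  have hy : y₀ = c + d := (U.starProjection_add_starProjection_orthogonal y₀).symm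
  have horth : ∀ u ∈ U, ∀ v ∈ Uᗮ, ⟪u, v⟫ = 0 := fun u hu v hv =>
    Submodule.inner_right_of_mem_orthogonal hu hv
  have hab : ⟪a, b⟫ = 0 := horth _ haU _ hbU
  have had : ⟪a, d⟫ = 0 := horth _ haU _ hdU
  have hcb : ⟪c, b⟫ = 0 := horth _ hcU _ hbU
  have hcd : ⟪c, d⟫ = 0 := horth _ hcU _ hdU
  have hba : ⟪b, a⟫ = 0 := by rw [real_inner_comm]; exact hab
  have hda : ⟪d, a⟫ = 0 := by rw [real_inner_comm]; exact had
  have hbc : ⟪b, c⟫ = 0 := by rw [real_inner_comm]; exact hcb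
  have hdc : ⟪d, c⟫ = 0 := by rw [real_inner_comm]; exact hcd
  have h3 : ⟪a - c, b - d⟫ = 0 := horth _ (U.sub_mem haU hcU) _ (Uᗮ.sub_mem hbU hdU)
  have hnx : ‖x₀‖ ^ 2 = ‖a‖ ^ 2 + ‖b‖ ^ 2 := by
    rw [hx, norm_add_sq_real, hab]; ring
  have hny : ‖y₀‖ ^ 2 = ‖c‖ ^ 2 + ‖d‖ ^ 2 := by
    rw [hy, norm_add_sq_real, hcd]; ring
  have hdiff : ‖x₀ - y₀‖ = ‖(a - c) - (b - d)‖ := by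
    have e1 : ‖(a - c) + (b - d)‖ ^ 2 = ‖a - c‖ ^ 2 + ‖b - d‖ ^ 2 := by
      rw [norm_add_sq_real, h3]; ring
    have e2 : ‖(a - c) - (b - d)‖ ^ 2 = ‖a - c‖ ^ 2 + ‖b - d‖ ^ 2 := by
      rw [norm_sub_sq_real, h3]; ring
    have hxy : x₀ - y₀ = (a - c) + (b - d) := by rw [hx, hy]; abel
    rw [hxy]
    nlinarith [norm_nonneg ((a - c) + (b - d)), norm_nonneg ((a - c) - (b - d))]
  have key : ⟪x₀ + y₀, (a - c) - (b - d)⟫ ≤ ‖x₀ + y₀‖ * ‖x₀ - y₀‖ := by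
    rw [hdiff]; exact real_inner_le_norm _ _
  have hinner : ⟪x₀ + y₀, (a - c) - (b - d)⟫ = ‖a‖ ^ 2 - ‖c‖ ^ 2 - ‖b‖ ^ 2 + ‖d‖ ^ 2 := by
    have hsum : x₀ + y₀ = (a + c) + (b + d) := by rw [hx, hy]; abel
    rw [hsum]
    simp only [inner_add_left, inner_sub_right]
    have hac : ⟪a, c⟫ = ⟪c, a⟫ := real_inner_comm c a
    have hbd : ⟪b, d⟫ = ⟪d, b⟫ := real_inner_comm d b
    have hsa : ⟪a, a⟫ = ‖a‖ ^ 2 := real_inner_self_eq_norm_sq a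
    have hsb : ⟪b, b⟫ = ‖b‖ ^ 2 := real_inner_self_eq_norm_sq b
    have hsc : ⟪c, c⟫ = ‖c‖ ^ 2 := real_inner_self_eq_norm_sq c
    have hsd : ⟪d, d⟫ = ‖d‖ ^ 2 := real_inner_self_eq_norm_sq d
    linarith
  have gb : a - x₀ = -b := by rw [hx]; abel
  have gc : d - y₀ = -c := by rw [hy]; abel
  rw [gb, gc, norm_neg, norm_neg]
  linarith [hinner ▸ key]
end

section
/- Let (x₀,y₀) ∈ X × X with ⟨x₀,y₀⟩ ≠ 0, x₀ ≠ y₀ and x₀ ≠ −y₀, and set λ := (‖x₀‖² + ‖y₀‖² − ‖x₀+y₀‖·‖x₀−y₀‖)/(2⟨x₀,y₀⟩). Then λ ≠ 1 and λ ≠ −1, the point (x,y) := (1/(1−λ²))·(x₀ − λ·y₀, y₀ − λ·x₀) is the unique nearest point to (x₀,y₀) in the cross C (i.e. (x,y) ∈ C, ‖x−x₀‖² + ‖y−y₀‖² ≤ ‖u−x₀‖² + ‖v−y₀‖² for all (u,v) ∈ C, and any (u,v) ∈ C attaining equality equals (x,y)), and the squared distance satisfies ‖x−x₀‖² + ‖y−y₀‖²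 = λ·⟨x₀,y₀⟩ = (‖x₀‖² + ‖y₀‖² − ‖x₀+y₀‖·‖x₀−y₀‖)/2. -/
open RealInnerProductSpace

set_option maxHeartbeats 1000000 in
theorem cross_projection_formula_generic_case
    {X : Type*} [NormedAddCommGroup X] [InnerProductSpace ℝ X] [CompleteSpace X]
    (x₀ y₀ : X) (h : ⟪x₀, y₀⟫ ≠ 0) (hne : x₀ ≠ y₀) (hne' : x₀ ≠ -y₀)
    (lam : ℝ)
    (hlam : lam = (‖x₀‖ ^ 2 + ‖y₀‖ ^ 2 - ‖x₀ + y₀‖ * ‖x₀ - y₀‖) / (2 * ⟪x₀, y₀⟫))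
    (x y : X)
    (hx : x = (1 / (1 - lam ^ 2)) • (x₀ - lam • y₀))
    (hy : y = (1 / (1 - lam ^ 2)) • (y₀ - lam • x₀)) :
    lam ≠ 1 ∧ lam ≠ -1 ∧
    ⟪x, y⟫ = 0 ∧
    (∀ u v : X, ⟪u, v⟫ = 0 →
      ‖x - x₀‖ ^ 2 + ‖y - y₀‖ ^ 2 ≤ ‖u - x₀‖ ^ 2 + ‖v - y₀‖ ^ 2) ∧
    (∀ u v : X, ⟪u, v⟫ = 0 →
      ‖u - x₀‖ ^ 2 + ‖v - y₀‖ ^ 2 = ‖x - x₀‖ ^ 2 + ‖y - y₀‖ ^ 2 →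
        u = x ∧ v = y) ∧
    ‖x - x₀‖ ^ 2 + ‖y - y₀‖ ^ 2 = lam * ⟪x₀, y₀⟫ ∧
    ‖x - x₀‖ ^ 2 + ‖y - y₀‖ ^ 2 =
      (‖x₀‖ ^ 2 + ‖y₀‖ ^ 2 - ‖x₀ + y₀‖ * ‖x₀ - y₀‖) / 2 := by
  set c : ℝ := ⟪x₀, y₀⟫ with hcdef
  set a : ℝ := ‖x₀‖^2 with hadef
  set b : ℝ := ‖y₀‖^2 with hbdef
  set P : ℝ := ‖x₀ + y₀‖ * ‖x₀ - y₀‖ with hPdef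
  have hPpos : 0 < P := by
    apply mul_pos <;> rw [norm_pos_iff]
    · intro hz; exact hne' (eq_neg_of_add_eq_zero_left hz)
    · intro hz; exact hne (sub_eq_zero.mp hz)
  have hP2 : P^2 = (a+b)^2 - 4*c^2 := by
    have h1 := norm_add_sq_real x₀ y₀
    have h2 := norm_sub_sq_real x₀ y₀
    have hPP : P^2 = ‖x₀+y₀‖^2 * ‖x₀-y₀‖^2 := by rw [hPdef]; ring
    rw [hPP, h1, h2]; ring
  have ha : 0 ≤ a := by positivity
  have hb : 0 ≤ b := by positivity
  have hc2 : 0 < c^2 := by positivity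
  have hab_gt : P < a + b := by nlinarith
  have hlam' : lam * (2*c) = a + b - P := by
    rw [hlam]; field_simp
  have hquad : c * lam^2 + c = (a+b) * lam := by
    have h4 : (4*c^2 : ℝ) ≠ 0 := by positivity
    refine mul_left_cancel₀ h4 ?_
    linear_combination c*(2*c*lam + a + b - P - 2*(a+b)) * hlam' + c * hP2
  have hlc : 0 < lam * c := by nlinarith
  have hone : lam^2 < 1 := by nlinarith [hquad, hlam', hP2, hPpos, hab_gt, hc2, hlc]
  have h1m : (1:ℝ) - lam^2 ≠ 0 := by nlinarith
  have habs : |lam| < 1 := by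
    have h' : |lam|^2 < 1 := by rw [sq_abs]; exact hone
    nlinarith [abs_nonneg lam]
  -- vector identities
  have hxs : x - x₀ = (-lam) • y := by
    rw [hx, hy]; match_scalars <;> (field_simp; try ring)
  have hys : y - y₀ = (-lam) • x := by
    rw [hx, hy]; match_scalars <;> (field_simp; try ring)
  have hx0 : x₀ = x + lam • y := by
    have := hxs; rw [sub_eq_iff_eq_add] at this
    rw [this]; module
  have hy0 : y₀ = y + lam • x := by
    have := hys; rw [sub_eq_iff_eq_add] at this
    rw [this]; module
  have hxy0 : ⟪x, y⟫ = 0 := by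
    rw [hx, hy]
    simp only [real_inner_smul_left, real_inner_smul_right, inner_sub_left, inner_sub_right,
      real_inner_self_eq_norm_sq]
    field_simp
    linear_combination hquad + lam^2 * real_inner_comm x₀ y₀
  have hNc : lam * (‖x‖^2 + ‖y‖^2) = c := by
    rw [hcdef, hx0, hy0]
    simp only [inner_add_left, inner_add_right, real_inner_smul_left, real_inner_smul_right,
      real_inner_self_eq_norm_sq]
    linear_combination -(1+lam^2)*hxy0 - lam^2 * real_inner_comm x y
  -- squared distance
  have hdx : ‖x - x₀‖^2 = lam^2 * ‖y‖^2 := by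
    rw [hxs, norm_smul]; simp [mul_pow, sq_abs]
  have hdy : ‖y - y₀‖^2 = lam^2 * ‖x‖^2 := by
    rw [hys, norm_smul]; simp [mul_pow, sq_abs]
  have hdist : ‖x - x₀‖^2 + ‖y - y₀‖^2 = lam * c := by
    rw [hdx, hdy]; linear_combination lam * hNc
  -- main estimate
  have main : ∀ u v : X, ⟪u, v⟫ = 0 →
      (1-|lam|) * (‖u-x‖^2+‖v-y‖^2) + lam*c ≤ ‖u-x₀‖^2+‖v-y₀‖^2 := by
    intro u v huv
    have h1 : u - x₀ = (u - x) - lam • y := by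
      rw [hx0]; module
    have h2 : v - y₀ = (v - y) - lam • x := by
      rw [hy0]; module
    have hn1 : ‖u-x₀‖^2 = ‖u-x‖^2 - 2*lam*⟪u-x,y⟫ + lam^2*‖y‖^2 := by
      rw [h1, norm_sub_sq_real, real_inner_smul_right, norm_smul]
      simp [mul_pow, sq_abs]; ring
    have hn2 : ‖v-y₀‖^2 = ‖v-y‖^2 - 2*lam*⟪v-y,x⟫ + lam^2*‖x‖^2 := by
      rw [h2, norm_sub_sq_real, real_inner_smul_right, norm_smul]
      simp [mul_pow, sq_abs]; ring
    have hpq : ⟪u-x, y⟫ + ⟪v-y, x⟫ = -⟪u-x, v-y⟫ := by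
      simp only [inner_sub_left, inner_sub_right]
      linear_combination huv - hxy0 + real_inner_comm x v - real_inner_comm x y
    have hiq : |⟪u-x, v-y⟫| ≤ ‖u-x‖ * ‖v-y‖ := abs_real_inner_le_norm _ _
    have hkey : (1-|lam|) * (‖u-x‖^2+‖v-y‖^2) ≤
        ‖u-x‖^2 + ‖v-y‖^2 + 2*lam*⟪u-x, v-y⟫ := by
      have e1 : -(|lam| * |⟪u-x, v-y⟫|) ≤ lam * ⟪u-x, v-y⟫ := by
        rw [← abs_mul]; exact neg_abs_le _
      have e2 : |lam| * |⟪u-x, v-y⟫| ≤ |lam| * (‖u-x‖ * ‖v-y‖) :=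
        mul_le_mul_of_nonneg_left hiq (abs_nonneg lam)
      have e3 : 2 * (|lam| * (‖u-x‖ * ‖v-y‖)) ≤ |lam| * (‖u-x‖^2+‖v-y‖^2) := by
        nlinarith [mul_nonneg (abs_nonneg lam) (sq_nonneg (‖u-x‖-‖v-y‖))]
      linarith
    have : ‖u-x₀‖^2 + ‖v-y₀‖^2
        = ‖u-x‖^2 + ‖v-y‖^2 + 2*lam*⟪u-x, v-y⟫ + lam*c := by
      rw [hn1, hn2]
      linear_combination -2*lam*hpq + lam*hNc
    linarith
  refine ⟨?_, ?_, hxy0, ?_, ?_, hdist, ?_⟩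
  · intro he; rw [he] at hone; norm_num at hone
  · intro he; rw [he] at hone; norm_num at hone
  · intro u v huv
    have := main u v huv
    have hnn : 0 ≤ (1-|lam|) * (‖u-x‖^2+‖v-y‖^2) := by
      apply mul_nonneg (by linarith) (by positivity)
    rw [hdist]; linarith
  · intro u v huv heq
    have h0 := main u v huv
    rw [hdist] at heq
    have hle : (1-|lam|) * (‖u-x‖^2+‖v-y‖^2) ≤ 0 := by linarith
    have hpos : 0 < 1 - |lam| := by linarith
    have hA : 0 ≤ ‖u-x‖^2+‖v-y‖^2 := by positivity
    have hz : ‖u-x‖^2+‖v-y‖^2 = 0 := by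
      rcases hA.lt_or_eq with hlt | he
      · exact absurd hle (not_le.mpr (mul_pos hpos hlt))
      · exact he.symm
    have s1 : 0 ≤ ‖u-x‖^2 := sq_nonneg _
    have s2 : 0 ≤ ‖v-y‖^2 := sq_nonneg _
    have hu2 : ‖u-x‖^2 = 0 := by linarith
    have hv2 : ‖v-y‖^2 = 0 := by linarith
    have hu : ‖u-x‖ = 0 := by
      exact pow_eq_zero_iff (n := 2) (by norm_num) |>.mp hu2
    have hv : ‖v-y‖ = 0 := by
      exact pow_eq_zero_iff (n := 2) (by norm_num) |>.mp hv2
    rw [norm_eq_zero, sub_eq_zero] at hu hv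
    exact ⟨hu, hv⟩
  · rw [hdist]; linarith
end

section
/- Let (x₀,y₀) ∈ X × X with x₀ = y₀ or x₀ = −y₀. Then the set of nearest points to (x₀,y₀) in the cross C (those (x,y) ∈ C with ‖x−x₀‖² + ‖y−y₀‖² ≤ ‖u−x₀‖² + ‖v−y₀‖² for all (u,v) ∈ C) equals the union over all closed linear subspaces U of X of the singletons {(P_U x₀, P_{U^⊥} y₀)}, and also equals {(0,y₀)} ∪ { (⟨u,x₀⟩·u, y₀ − ⟨u,y₀⟩·u) : u ∈ X, ‖u‖ = 1 }; moreover every such nearest point (x,y) satisfies ‖x−x₀‖² + ‖y−y₀‖² = (‖x₀‖² + ‖y₀‖²)/2. -/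
open RealInnerProductSpace

section Aux
set_option linter.unusedSectionVars false

variable {X : Type*} [NormedAddCommGroup X] [InnerProductSpace ℝ X] [CompleteSpace X]

lemma cross_key (x₀ : X) (ε : ℝ) (hε : ε * ε = 1) (x y : X) (hxy : ⟪x, y⟫ = 0) :
    ‖x - x₀‖ ^ 2 + ‖y - ε • x₀‖ ^ 2 = ‖x + ε • y - x₀‖ ^ 2 + ‖x₀‖ ^ 2 := by
  have e : ∀ a : X, ‖a‖ ^ 2 = ⟪a, a⟫ := fun a => (real_inner_self_eq_norm_sq a).symm
  simp only [e]
  simp only [inner_sub_left, inner_sub_right, inner_add_left, inner_add_right,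
    real_inner_smul_left, real_inner_smul_right]
  have c1 : ⟪y, x⟫ = 0 := by rw [real_inner_comm]; exact hxy
  linear_combination (⟪x₀, x₀⟫ - ⟪y, y⟫) * hε - ε * hxy - ε * c1

lemma cross_min_iff (x₀ : X) (ε : ℝ) (hε : ε * ε = 1) (x y : X) (hxy : ⟪x, y⟫ = 0) :
    (∀ u v : X, ⟪u, v⟫ = 0 →
      ‖x - x₀‖ ^ 2 + ‖y - ε • x₀‖ ^ 2 ≤ ‖u - x₀‖ ^ 2 + ‖v - ε • x₀‖ ^ 2)
    ↔ x + ε • y = x₀ := by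
  constructor
  · intro hmin
    have h0 := hmin 0 (ε • x₀) (by simp)
    rw [cross_key x₀ ε hε x y hxy] at h0
    simp only [zero_sub, norm_neg, sub_self, norm_zero] at h0
    have hle : ‖x + ε • y - x₀‖ ^ 2 ≤ 0 := by nlinarith
    have : ‖x + ε • y - x₀‖ = 0 := by nlinarith [norm_nonneg (x + ε • y - x₀)]
    have := norm_eq_zero.mp this
    exact sub_eq_zero.mp this
  · intro hx u v huv
    rw [cross_key x₀ ε hε x y hxy, cross_key x₀ ε hε u v huv, hx]
    simp only [sub_self, norm_zero]
    nlinarith [sq_nonneg ‖u + ε • v - x₀‖]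

lemma orthogonalProjection_bot :
    (⊥ : Submodule ℝ X).orthogonalProjection = 0 := Submodule.orthogonalProjectionOnto_bot

lemma orthogonalProjection_orthogonal_val (K : Submodule ℝ X) [K.HasOrthogonalProjection]
    (u : X) : (Kᗮ.orthogonalProjection u : X) = u - K.orthogonalProjection u :=
  Submodule.starProjection_orthogonal_val u

lemma orthogonalProjection_singleton {v : X} (w : X) :
    ((ℝ ∙ v).orthogonalProjection w : X) = (⟪v, w⟫ / ‖v‖ ^ 2) • v := by
  simpa using Submodule.starProjection_singleton ℝ (v := v) w

lemma orthogonalProjection_add_orthogonalProjection_orthogonal (K : Submodule ℝ X)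
    [K.HasOrthogonalProjection] (w : X) :
    (K.orthogonalProjection w : X) + (Kᗮ.orthogonalProjection w : X) = w :=
  K.starProjection_add_starProjection_orthogonal w

end Aux

theorem cross_projection_multivalued_case
    {X : Type*} [NormedAddCommGroup X] [InnerProductSpace ℝ X] [CompleteSpace X]
    (x₀ y₀ : X) (h : x₀ = y₀ ∨ x₀ = -y₀) :
    ({p : X × X | ⟪p.1, p.2⟫ = 0 ∧
        ∀ u v : X, ⟪u, v⟫ = 0 →
          ‖p.1 - x₀‖ ^ 2 + ‖p.2 - y₀‖ ^ 2 ≤ ‖u - x₀‖ ^ 2 + ‖v - y₀‖ ^ 2} =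
      {p : X × X | ∃ (U : Submodule ℝ X) (_ : IsClosed (U : Set X))
          (_ : CompleteSpace U),
        p = ((Submodule.orthogonalProjection U x₀ : X), (Submodule.orthogonalProjection Uᗮ y₀ : X))}) ∧
    ({p : X × X | ⟪p.1, p.2⟫ = 0 ∧
        ∀ u v : X, ⟪u, v⟫ = 0 →
          ‖p.1 - x₀‖ ^ 2 + ‖p.2 - y₀‖ ^ 2 ≤ ‖u - x₀‖ ^ 2 + ‖v - y₀‖ ^ 2} =
      insert ((0 : X), y₀)
        {p : X × X | ∃ u : X, ‖u‖ = 1 ∧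
          p = (⟪u, x₀⟫ • u, y₀ - ⟪u, y₀⟫ • u)}) ∧
    (∀ x y : X, ⟪x, y⟫ = 0 →
      (∀ u v : X, ⟪u, v⟫ = 0 →
        ‖x - x₀‖ ^ 2 + ‖y - y₀‖ ^ 2 ≤ ‖u - x₀‖ ^ 2 + ‖v - y₀‖ ^ 2) →
      ‖x - x₀‖ ^ 2 + ‖y - y₀‖ ^ 2 = (‖x₀‖ ^ 2 + ‖y₀‖ ^ 2) / 2) := by
  obtain ⟨ε, hε, hy₀⟩ : ∃ ε : ℝ, ε * ε = 1 ∧ y₀ = ε • x₀ := by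
    rcases h with h | h
    · exact ⟨1, by norm_num, by simp [h]⟩
    · exact ⟨-1, by norm_num, by rw [neg_smul, one_smul, h, neg_neg]⟩
  subst hy₀
  have hee : ∀ z : X, ε • ε • z = z := by
    intro z; rw [smul_smul, hε, one_smul]
  refine ⟨?_, ?_, ?_⟩
  · ext ⟨x, y⟩
    simp only [Set.mem_setOf_eq]
    constructor
    · rintro ⟨hxy, hmin⟩
      have hx : x + ε • y = x₀ := (cross_min_iff x₀ ε hε x y hxy).mp hmin
      by_cases hx0 : x = 0
      · subst hx0
        rw [zero_add] at hx
        have hy : y = ε • x₀ := by rw [← hx, hee]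
        refine ⟨⊥, Submodule.closed_of_finiteDimensional _, inferInstance, ?_⟩
        have hb : (Submodule.orthogonalProjection (⊥ : Submodule ℝ X) x₀ : X) = 0 := by
          simp [orthogonalProjection_bot]
        have ht : (Submodule.orthogonalProjection (⊥ : Submodule ℝ X)ᗮ (ε • x₀) : X) = ε • x₀ := by
          rw [orthogonalProjection_orthogonal_val]
          simp [orthogonalProjection_bot]
        rw [Prod.mk.injEq]
        exact ⟨hb.symm, by rw [ht, hy]⟩
      · have hnx : ‖x‖ ^ 2 ≠ 0 := pow_ne_zero 2 (norm_ne_zero_iff.mpr hx0)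
        have hinner : ⟪x, x₀⟫ = ‖x‖ ^ 2 := by
          rw [← hx, inner_add_right, real_inner_smul_right, hxy,
            real_inner_self_eq_norm_sq]; ring
        refine ⟨ℝ ∙ x, Submodule.closed_of_finiteDimensional _, inferInstance, ?_⟩
        have hP : (Submodule.orthogonalProjection (ℝ ∙ x) x₀ : X) = x := by
          rw [orthogonalProjection_singleton, hinner]
          norm_num [div_self hnx]
        have hP2 : (Submodule.orthogonalProjection (ℝ ∙ x)ᗮ (ε • x₀) : X) = y := by
          rw [orthogonalProjection_orthogonal_val, map_smul]
          push_cast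
          rw [hP, ← hx, smul_add, hee]
          abel
        rw [hP, hP2]
    · rintro ⟨U, hU, hcU, hp⟩
      rw [Prod.mk.injEq] at hp
      obtain ⟨rfl, rfl⟩ := hp
      have hxy : ⟪(Submodule.orthogonalProjection U x₀ : X), (Submodule.orthogonalProjection Uᗮ (ε • x₀) : X)⟫ = 0 :=
        Submodule.inner_right_of_mem_orthogonal (Submodule.orthogonalProjection U x₀).2
          (Submodule.orthogonalProjection Uᗮ (ε • x₀)).2
      refine ⟨hxy, (cross_min_iff x₀ ε hε _ _ hxy).mpr ?_⟩
      rw [map_smul]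
      push_cast
      rw [smul_smul, hε, one_smul]
      exact orthogonalProjection_add_orthogonalProjection_orthogonal U x₀
  · ext ⟨x, y⟩
    simp only [Set.mem_setOf_eq, Set.mem_insert_iff, Prod.mk.injEq]
    constructor
    · rintro ⟨hxy, hmin⟩
      have hx : x + ε • y = x₀ := (cross_min_iff x₀ ε hε x y hxy).mp hmin
      by_cases hx0 : x = 0
      · left
        subst hx0
        rw [zero_add] at hx
        exact ⟨rfl, by rw [← hx, hee]⟩
      · right
        have hnx : ‖x‖ ≠ 0 := norm_ne_zero_iff.mpr hx0
        have hinner : ⟪x, x₀⟫ = ‖x‖ ^ 2 := by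
          rw [← hx, inner_add_right, real_inner_smul_right, hxy,
            real_inner_self_eq_norm_sq]; ring
        have h1 : ⟪‖x‖⁻¹ • x, x₀⟫ • (‖x‖⁻¹ • x) = x := by
          have hc : ‖x‖⁻¹ * ‖x‖ ^ 2 * ‖x‖⁻¹ = 1 := by
            field_simp
          rw [real_inner_smul_left, hinner, smul_smul, hc, one_smul]
        have h2 : ε • x₀ - ⟪‖x‖⁻¹ • x, ε • x₀⟫ • (‖x‖⁻¹ • x) = y := by
          rw [real_inner_smul_right, mul_smul, h1, ← hx, smul_add, hee]
          abel
        refine ⟨‖x‖⁻¹ • x, ?_, h1.symm, h2.symm⟩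
        rw [norm_smul, norm_inv, norm_norm, inv_mul_cancel₀ hnx]
    · rintro (⟨rfl, rfl⟩ | ⟨u, hu, h1, h2⟩)
      · have hxy : ⟪(0 : X), ε • x₀⟫ = 0 := by simp
        exact ⟨hxy, (cross_min_iff x₀ ε hε _ _ hxy).mpr (by rw [zero_add, hee])⟩
      · subst h1; subst h2
        have huu : ⟪u, u⟫ = (1 : ℝ) := by
          rw [real_inner_self_eq_norm_sq, hu]; norm_num
        have hxy : ⟪⟪u, x₀⟫ • u, ε • x₀ - ⟪u, ε • x₀⟫ • u⟫ = 0 := by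
          rw [inner_sub_right, real_inner_smul_left, real_inner_smul_left,
            real_inner_smul_right, real_inner_smul_right, huu]
          ring
        refine ⟨hxy, (cross_min_iff x₀ ε hε _ _ hxy).mpr ?_⟩
        rw [real_inner_smul_right, smul_sub, hee, smul_smul]
        have hc : ε * (ε * ⟪u, x₀⟫) = ⟪u, x₀⟫ := by rw [← mul_assoc, hε, one_mul]
        rw [hc]
        abel
  · intro x y hxy hmin
    have hx : x + ε • y = x₀ := (cross_min_iff x₀ ε hε x y hxy).mp hmin
    rw [cross_key x₀ ε hε x y hxy, hx, sub_self, norm_zero]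
    have h2 : ‖ε • x₀‖ ^ 2 = ‖x₀‖ ^ 2 := by
      rw [norm_smul, mul_pow, Real.norm_eq_abs, sq_abs, sq, hε, one_mul]
    rw [h2]
    ring
end
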